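/- The five diagonal matrix H is the conjugate of (J_{[2]} − cI)² by T; entrywise: for all n, m ≥ 0, Σ_k T(n,k)·((J_{[2]} − cI)²)(k,m) = Σ_k H(n,k)·T(k,m), where ((J_{[2]} − cI)²)(k,m) = Σ_j (J_{[2]}(k,j) − c·δ_{kj})·(J_{[2]}(j,m) − c·δ_{jm}), and all sums have only finitely many nonzero terms because J_{[2]} is tridiagonal, H is five-diagonal, and T is lower triangular with bandwidth 2. -/

import Mathlib

open MeasureTheory Polynomial

/-- Squared norm `‖Q‖_μ² = ∫ Q(x)² dμ`. -/
noncomputable def nrmSq (μ : Measure ℝ) (Q : Polynomial ℝ) : ℝ := ∫ x, Q.eval x ^ 2 ∂μ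

/-- Squared norm in the 2-iterated Christoffel measure `(x-c)² dμ`. -/
noncomputable def nrmSq2 (μ : Measure ℝ) (c : ℝ) (Q : Polynomial ℝ) : ℝ :=
  ∫ x, Q.eval x ^ 2 * (x - c) ^ 2 ∂μ

/-- Sobolev-type inner product `⟨f,g⟩_S = ∫ f g dμ + M f(c) g(c) + N f'(c) g'(c)`. -/
noncomputable def ipS (μ : Measure ℝ) (c M N : ℝ) (f g : Polynomial ℝ) : ℝ :=
  (∫ x, f.eval x * g.eval x ∂μ) + M * (f.eval c * g.eval c)
    + N * ((derivative f).eval c * (derivative g).eval c)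

/-- Leading coefficient `r_n = 1/‖P_n‖_μ` of the orthonormal polynomial `p_n`. -/
noncomputable def rC (μ : Measure ℝ) (P : ℕ → Polynomial ℝ) (n : ℕ) : ℝ :=
  1 / Real.sqrt (nrmSq μ (P n))

/-- Leading coefficient `r_n^{[2]} = 1/‖P_n^{[2]}‖_{[2]}`. -/
noncomputable def r2C (μ : Measure ℝ) (c : ℝ) (P2 : ℕ → Polynomial ℝ) (n : ℕ) : ℝ :=
  1 / Real.sqrt (nrmSq2 μ c (P2 n))

/-- Orthonormal polynomial `p_n = P_n/‖P_n‖_μ`. -/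
noncomputable def onP (μ : Measure ℝ) (P : ℕ → Polynomial ℝ) (n : ℕ) : Polynomial ℝ :=
  C (rC μ P n) * P n

/-- Orthonormal polynomial `p_n^{[2]} = P_n^{[2]}/‖P_n^{[2]}‖_{[2]}`. -/
noncomputable def onP2 (μ : Measure ℝ) (c : ℝ) (P2 : ℕ → Polynomial ℝ) (n : ℕ) : Polynomial ℝ :=
  C (r2C μ c P2 n) * P2 n

/-- Leading coefficient `t_n = 1/‖S_n^{M,N}‖_S` of the Sobolev-type orthonormal polynomial. -/
noncomputable def tC (μ : Measure ℝ) (c M N : ℝ) (S : ℕ → Polynomial ℝ) (n : ℕ) : ℝ :=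
  1 / Real.sqrt (ipS μ c M N (S n) (S n))

/-- Sobolev-type orthonormal polynomial `s_n^{M,N} = S_n^{M,N}/‖S_n^{M,N}‖_S`. -/
noncomputable def sN (μ : Measure ℝ) (c M N : ℝ) (S : ℕ → Polynomial ℝ) (n : ℕ) : Polynomial ℝ :=
  C (tC μ c M N S n) * S n

/-- Diagonal kernel value `K_n(c,c) = Σ_{j=0}^n P_j(c)²/‖P_j‖_μ²`. -/
noncomputable def Kcc (μ : Measure ℝ) (P : ℕ → Polynomial ℝ) (c : ℝ) (n : ℕ) : ℝ :=
  ∑ j ∈ Finset.range (n + 1), (P j).eval c ^ 2 / nrmSq μ (P j)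

/-- Kernel `K_n^{(0,j)}(x,c)` as a polynomial in `x`:
`Σ_{k=0}^n (d/dy)^j P_k(y)|_{y=c} · P_k(x)/‖P_k‖_μ²`. -/
noncomputable def Kpoly (μ : Measure ℝ) (P : ℕ → Polynomial ℝ) (c : ℝ) (n j : ℕ) : Polynomial ℝ :=
  ∑ k ∈ Finset.range (n + 1), C ((derivative^[j] (P k)).eval c / nrmSq μ (P k)) * P k

/-- Mixed derivative of the kernel at the diagonal:
`K_n^{(i,j)}(c,c) = Σ_{k=0}^n P_k^{(i)}(c) P_k^{(j)}(c)/‖P_k‖_μ²`. -/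
noncomputable def Kder (μ : Measure ℝ) (P : ℕ → Polynomial ℝ) (c : ℝ) (n i j : ℕ) : ℝ :=
  ∑ k ∈ Finset.range (n + 1),
    (derivative^[i] (P k)).eval c * (derivative^[j] (P k)).eval c / nrmSq μ (P k)

/-- Connection coefficient `d_n`. -/
noncomputable def dCoef (P : ℕ → Polynomial ℝ) (c : ℝ) (n : ℕ) : ℝ :=
  ((P (n + 2)).eval c * (derivative (P n)).eval c
      - (derivative (P (n + 2))).eval c * (P n).eval c) /
    ((P (n + 1)).eval c * (derivative (P n)).eval c
      - (derivative (P (n + 1))).eval c * (P n).eval c)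

/-- Connection coefficient `e_n`. -/
noncomputable def eCoef (P : ℕ → Polynomial ℝ) (c : ℝ) (n : ℕ) : ℝ :=
  ((P (n + 2)).eval c * (derivative (P (n + 1))).eval c
      - (derivative (P (n + 2))).eval c * (P (n + 1)).eval c) /
    ((P (n + 1)).eval c * (derivative (P n)).eval c
      - (derivative (P (n + 1))).eval c * (P n).eval c)

/-- Connection coefficient `γ_{j,n} = ⟨s_n^{M,N}, p_j^{[2]}⟩_{[2]}`. -/
noncomputable def gamC (μ : Measure ℝ) (c M N : ℝ) (S P2 : ℕ → Polynomial ℝ) (j n : ℕ) : ℝ :=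
  ∫ x, (sN μ c M N S n).eval x * (onP2 μ c P2 j).eval x * (x - c) ^ 2 ∂μ

/-- Jacobi matrix of `μ`: `J(n,m) = ∫ x p_n(x) p_m(x) dμ`. -/
noncomputable def Jmat (μ : Measure ℝ) (P : ℕ → Polynomial ℝ) (n m : ℕ) : ℝ :=
  ∫ x, x * ((onP μ P n).eval x * (onP μ P m).eval x) ∂μ

/-- Jacobi matrix of `(x-c)² dμ`: `J_{[2]}(n,m) = ∫ x p_n^{[2]}(x) p_m^{[2]}(x) (x-c)² dμ`. -/
noncomputable def J2mat (μ : Measure ℝ) (c : ℝ) (P2 : ℕ → Polynomial ℝ) (n m : ℕ) : ℝ :=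
  ∫ x, x * ((onP2 μ c P2 n).eval x * (onP2 μ c P2 m).eval x) * (x - c) ^ 2 ∂μ

/-- Five-diagonal matrix `H(n,m) = ⟨(x-c)² s_n^{M,N}, s_m^{M,N}⟩_S`. -/
noncomputable def Hmat (μ : Measure ℝ) (c M N : ℝ) (S : ℕ → Polynomial ℝ) (n m : ℕ) : ℝ :=
  ipS μ c M N ((X - C c) ^ 2 * sN μ c M N S n) (sN μ c M N S m)

/-- Kronecker delta. -/
noncomputable def kdel (n m : ℕ) : ℝ := if n = m then 1 else 0

/-- Lower triangular connection matrix `T(n,m) = ⟨s_n^{M,N}, p_m^{[2]}⟩_{[2]}`. -/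
noncomputable def Tmat (μ : Measure ℝ) (c M N : ℝ) (S P2 : ℕ → Polynomial ℝ) (n m : ℕ) : ℝ :=
  gamC μ c M N S P2 m n

section Aux
open MeasureTheory Polynomial
variable {μ : Measure ℝ}

/-- Integral of a polynomial against `μ`. -/
noncomputable def intP (μ : Measure ℝ) (q : Polynomial ℝ) : ℝ := ∫ x, q.eval x ∂μ

lemma intPoly (hmom : ∀ n : ℕ, Integrable (fun x : ℝ => x ^ n) μ) (q : Polynomial ℝ) :
    Integrable (fun x => q.eval x) μ := by
  have h : (fun x : ℝ => q.eval x)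
      = fun x => ∑ i ∈ Finset.range (q.natDegree + 1), q.coeff i * x ^ i := by
    funext x; exact q.eval_eq_sum_range x
  rw [h]
  exact integrable_finset_sum _ fun i _ => (hmom i).const_mul _

lemma intP_add (hmom : ∀ n : ℕ, Integrable (fun x : ℝ => x ^ n) μ) (p q : Polynomial ℝ) :
    intP μ (p + q) = intP μ p + intP μ q := by
  unfold intP
  simp only [Polynomial.eval_add]
  exact integral_add (intPoly hmom p) (intPoly hmom q)

lemma intP_Cmul (a : ℝ) (p : Polynomial ℝ) : intP μ (C a * p) = a * intP μ p := by
  unfold intP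
  simp only [eval_mul, eval_C]
  exact integral_const_mul a _

lemma intP_sum (hmom : ∀ n : ℕ, Integrable (fun x : ℝ => x ^ n) μ) {ι : Type*} (s : Finset ι)
    (f : ι → Polynomial ℝ) : intP μ (∑ i ∈ s, f i) = ∑ i ∈ s, intP μ (f i) := by
  classical
  induction s using Finset.induction with
  | empty => simp [intP]
  | insert _ _ h ih => rw [Finset.sum_insert h, Finset.sum_insert h, intP_add hmom, ih]

lemma intP_sub (hmom : ∀ n : ℕ, Integrable (fun x : ℝ => x ^ n) μ) (p q : Polynomial ℝ) :
    intP μ (p - q) = intP μ p - intP μ q := by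
  have h := intP_add hmom (p - q) q
  simp only [sub_add_cancel] at h
  linarith

/-- Any linear functional vanishing on the monic degree-graded family `P 0, …, P d`
vanishes on every polynomial of degree `≤ d`. -/
lemma span_zero (P : ℕ → Polynomial ℝ) (hm : ∀ n, (P n).Monic) (hd : ∀ n, (P n).natDegree = n)
    (g : Polynomial ℝ → ℝ)
    (hadd : ∀ p q, g (p + q) = g p + g q)
    (hsmul : ∀ a p, g (C a * p) = a * g p)
    (d : ℕ) (hP : ∀ j, j ≤ d → g (P j) = 0) :
    ∀ f : Polynomial ℝ, f.natDegree ≤ d → g f = 0 := by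
  have hg0 : g 0 = 0 := by simpa using hsmul 0 0
  suffices h : ∀ m, ∀ f : Polynomial ℝ, f.natDegree ≤ m → m ≤ d → g f = 0 by
    intro f hf; exact h d f hf le_rfl
  intro m
  induction m using Nat.strong_induction_on with
  | _ m ih =>
    intro f hf hmd
    by_cases h0 : f = 0
    · simpa [h0] using hg0
    · set e := f.natDegree with he
      set r := f - C f.leadingCoeff * P e with hr
      have hlc : f.leadingCoeff ≠ 0 := leadingCoeff_ne_zero.mpr h0
      have hdlt : r.degree < f.degree := by
        apply degree_sub_lt
        · rw [degree_C_mul hlc, degree_eq_natDegree h0, degree_eq_natDegree (hm e).ne_zero,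
            hd e]
        · exact h0
        · rw [leadingCoeff_mul, leadingCoeff_C, (hm e).leadingCoeff, mul_one]
      have hfe : f = r + C f.leadingCoeff * P e := by rw [hr]; ring
      have hgr : g r = 0 := by
        by_cases hr0 : r = 0
        · simpa [hr0] using hg0
        · have hlt : r.natDegree < e := natDegree_lt_natDegree hr0 hdlt
          exact ih r.natDegree (lt_of_lt_of_le hlt hf) r le_rfl
            (le_trans (le_of_lt (lt_of_lt_of_le hlt hf)) hmd)
      have hPe : g (P e) = 0 := hP e (le_trans hf hmd)
      rw [hfe, hadd, hsmul, hgr, hPe, mul_zero, add_zero]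

end Aux
section Aux2
open MeasureTheory Polynomial
variable {μ : Measure ℝ} {c M N : ℝ}

lemma ipS_add_left (hmom : ∀ n : ℕ, Integrable (fun x : ℝ => x ^ n) μ) (p q B : Polynomial ℝ) :
    ipS μ c M N (p + q) B = ipS μ c M N p B + ipS μ c M N q B := by
  unfold ipS
  have h1 : Integrable (fun x => p.eval x * B.eval x) μ := by
    simpa [eval_mul] using intPoly hmom (p * B)
  have h2 : Integrable (fun x => q.eval x * B.eval x) μ := by
    simpa [eval_mul] using intPoly hmom (q * B)
  have h : (∫ x, (p + q).eval x * B.eval x ∂μ)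
      = (∫ x, p.eval x * B.eval x ∂μ) + ∫ x, q.eval x * B.eval x ∂μ := by
    rw [← integral_add h1 h2]
    congr 1; funext x; simp [add_mul]
  rw [h]
  simp only [derivative_add, eval_add]
  ring

lemma ipS_Cmul_left (a : ℝ) (p B : Polynomial ℝ) :
    ipS μ c M N (C a * p) B = a * ipS μ c M N p B := by
  unfold ipS
  simp only [eval_mul, eval_C, derivative_C_mul]
  have h : (∫ x, a * p.eval x * B.eval x ∂μ) = a * ∫ x, p.eval x * B.eval x ∂μ := by
    rw [← integral_const_mul]
    congr 1; funext x; ring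
  rw [h]; ring

lemma ipS_comm (f g : Polynomial ℝ) : ipS μ c M N f g = ipS μ c M N g f := by
  unfold ipS
  have h : ∀ x : ℝ, f.eval x * g.eval x = g.eval x * f.eval x := fun x => mul_comm _ _
  simp_rw [h]
  ring

lemma ipS_Cmul_right (a : ℝ) (p B : Polynomial ℝ) :
    ipS μ c M N B (C a * p) = a * ipS μ c M N B p := by
  rw [ipS_comm, ipS_Cmul_left, ipS_comm]

lemma eval_w_zero (f : Polynomial ℝ) : ((X - C c) ^ 2 * f).eval c = 0 := by simp

lemma deriv_w_zero (f : Polynomial ℝ) : (derivative ((X - C c) ^ 2 * f)).eval c = 0 := by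
  rw [derivative_mul, derivative_pow]
  simp

lemma ipS_shift (f g : Polynomial ℝ) :
    ipS μ c M N ((X - C c) ^ 2 * f) g = ipS μ c M N f ((X - C c) ^ 2 * g) := by
  unfold ipS
  have h : ∀ x : ℝ, ((X - C c) ^ 2 * f).eval x * g.eval x
      = f.eval x * (((X - C c) ^ 2 * g).eval x) := by
    intro x; simp only [eval_mul, eval_pow, eval_sub, eval_X, eval_C]; ring
  simp_rw [h]
  rw [deriv_w_zero f, deriv_w_zero g]
  ring

lemma ipS_w (hmom : ∀ n : ℕ, Integrable (fun x : ℝ => x ^ n) μ) (f g : Polynomial ℝ) :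
    ipS μ c M N f ((X - C c) ^ 2 * g) = intP μ (f * g * (X - C c) ^ 2) := by
  unfold ipS intP
  rw [eval_w_zero g, deriv_w_zero g]
  have h : ∀ x : ℝ, f.eval x * ((X - C c) ^ 2 * g).eval x = (f * g * (X - C c) ^ 2).eval x := by
    intro x; simp only [eval_mul, eval_pow, eval_sub, eval_X, eval_C]; ring
  simp_rw [h]
  ring

lemma ipS_self_pos (hpos : ∀ q : Polynomial ℝ, q ≠ 0 → 0 < ∫ x, q.eval x ^ 2 ∂μ)
    (hM : 0 ≤ M) (hN : 0 ≤ N) (q : Polynomial ℝ) (hq : q ≠ 0) :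
    0 < ipS μ c M N q q := by
  unfold ipS
  have h1 : (∫ x, q.eval x * q.eval x ∂μ) = ∫ x, q.eval x ^ 2 ∂μ := by
    congr 1; funext x; ring
  rw [h1]
  have h2 := hpos q hq
  nlinarith [mul_self_nonneg (q.eval c), mul_self_nonneg ((derivative q).eval c),
    mul_nonneg hM (mul_self_nonneg (q.eval c)),
    mul_nonneg hN (mul_self_nonneg ((derivative q).eval c))]

lemma ipS_self_ge (hM : 0 ≤ M) (hN : 0 ≤ N) (q : Polynomial ℝ) :
    (∫ x, q.eval x ^ 2 ∂μ) ≤ ipS μ c M N q q := by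
  unfold ipS
  have h1 : (∫ x, q.eval x * q.eval x ∂μ) = ∫ x, q.eval x ^ 2 ∂μ := by
    congr 1; funext x; ring
  rw [h1]
  nlinarith [mul_nonneg hM (mul_self_nonneg (q.eval c)),
    mul_nonneg hN (mul_self_nonneg ((derivative q).eval c))]

lemma nrmSq2_pos (hpos : ∀ q : Polynomial ℝ, q ≠ 0 → 0 < ∫ x, q.eval x ^ 2 ∂μ)
    (q : Polynomial ℝ) (hq : q ≠ 0) : 0 < nrmSq2 μ c q := by
  have h := hpos (q * (X - C c)) (mul_ne_zero hq (X_sub_C_ne_zero c))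
  unfold nrmSq2
  convert h using 1
  congr 1; funext x
  simp only [eval_mul, eval_sub, eval_X, eval_C]
  ring

end Aux2
section Aux3
open MeasureTheory Polynomial
variable {μ : Measure ℝ} {c M N : ℝ} {P2 S : ℕ → Polynomial ℝ}

lemma intP_eval3 (p q : Polynomial ℝ) :
    intP μ (p * q * (X - C c) ^ 2) = ∫ x, p.eval x * q.eval x * (x - c) ^ 2 ∂μ := by
  unfold intP
  congr 1; funext x
  simp only [eval_mul, eval_pow, eval_sub, eval_X, eval_C]

/-- Orthogonality of `P2 j` (w.r.t. `(x-c)² dμ`) to all lower-degree polynomials. -/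
lemma orthP2 (hmom : ∀ n : ℕ, Integrable (fun x : ℝ => x ^ n) μ)
    (hP2m : ∀ n, (P2 n).Monic) (hP2d : ∀ n, (P2 n).natDegree = n)
    (hP2o : ∀ m n, m ≠ n → ∫ x, (P2 m).eval x * (P2 n).eval x * (x - c) ^ 2 ∂μ = 0)
    (j : ℕ) (f : Polynomial ℝ) (hf : f.natDegree < j) :
    intP μ (f * (P2 j * (X - C c) ^ 2)) = 0 := by
  refine span_zero P2 hP2m hP2d (fun f => intP μ (f * (P2 j * (X - C c) ^ 2)))
    (fun p q => by
      show intP μ ((p + q) * (P2 j * (X - C c) ^ 2)) = _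
      rw [add_mul, intP_add hmom])
    (fun a p => by
      show intP μ (C a * p * (P2 j * (X - C c) ^ 2)) = _
      rw [mul_assoc, intP_Cmul]) (j - 1) ?_ f (by omega)
  intro i hi
  have hij : i ≠ j := by omega
  show intP μ (P2 i * (P2 j * (X - C c) ^ 2)) = 0
  rw [← mul_assoc, intP_eval3, hP2o i j hij]

/-- Orthonormality of `onP2`. -/
lemma onP2_on (hmom : ∀ n : ℕ, Integrable (fun x : ℝ => x ^ n) μ)
    (hpos : ∀ q : Polynomial ℝ, q ≠ 0 → 0 < ∫ x, q.eval x ^ 2 ∂μ)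
    (hP2m : ∀ n, (P2 n).Monic)
    (hP2o : ∀ m n, m ≠ n → ∫ x, (P2 m).eval x * (P2 n).eval x * (x - c) ^ 2 ∂μ = 0)
    (j k : ℕ) :
    intP μ (onP2 μ c P2 j * onP2 μ c P2 k * (X - C c) ^ 2) = kdel j k := by
  have hrw : onP2 μ c P2 j * onP2 μ c P2 k * (X - C c) ^ 2
      = C (r2C μ c P2 j) * (C (r2C μ c P2 k) * (P2 j * P2 k * (X - C c) ^ 2)) := by
    unfold onP2; ring
  rw [hrw, intP_Cmul, intP_Cmul, intP_eval3]
  by_cases hjk : j = k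
  · subst hjk
    have hv : 0 < nrmSq2 μ c (P2 j) := nrmSq2_pos hpos (P2 j) (hP2m j).ne_zero
    have he : (∫ x, (P2 j).eval x * (P2 j).eval x * (x - c) ^ 2 ∂μ) = nrmSq2 μ c (P2 j) := by
      unfold nrmSq2; congr 1; funext x; ring
    rw [he]
    unfold kdel r2C
    rw [if_pos rfl]
    have hs : Real.sqrt (nrmSq2 μ c (P2 j)) * Real.sqrt (nrmSq2 μ c (P2 j))
        = nrmSq2 μ c (P2 j) := Real.mul_self_sqrt hv.le
    have hs0 : (0:ℝ) < Real.sqrt (nrmSq2 μ c (P2 j)) := Real.sqrt_pos.mpr hv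
    field_simp
    rw [sq, hs]
  · rw [hP2o j k hjk, kdel, if_neg hjk]; ring

end Aux3
section Aux4
open MeasureTheory Polynomial
variable {μ : Measure ℝ} {c M N : ℝ} {P2 S : ℕ → Polynomial ℝ}

/-- Sobolev orthogonality of `S n` to lower-degree polynomials. -/
lemma orthS (hmom : ∀ n : ℕ, Integrable (fun x : ℝ => x ^ n) μ)
    (hSm : ∀ n, (S n).Monic) (hSd : ∀ n, (S n).natDegree = n)
    (hSo : ∀ m n, m ≠ n → ipS μ c M N (S m) (S n) = 0)
    (n : ℕ) (f : Polynomial ℝ) (hf : f.natDegree < n) :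
    ipS μ c M N f (S n) = 0 := by
  refine span_zero S hSm hSd (fun f => ipS μ c M N f (S n))
    (fun p q => ipS_add_left hmom p q (S n))
    (fun a p => ipS_Cmul_left a p (S n)) (n - 1) ?_ f (by omega)
  intro i hi
  exact hSo i n (by omega)

lemma ipS_S_pos (hpos : ∀ q : Polynomial ℝ, q ≠ 0 → 0 < ∫ x, q.eval x ^ 2 ∂μ)
    (hM : 0 ≤ M) (hN : 0 ≤ N) (hSm : ∀ n, (S n).Monic) (n : ℕ) :
    0 < ipS μ c M N (S n) (S n) :=
  ipS_self_pos hpos hM hN (S n) (hSm n).ne_zero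

lemma tC_pos (hpos : ∀ q : Polynomial ℝ, q ≠ 0 → 0 < ∫ x, q.eval x ^ 2 ∂μ)
    (hM : 0 ≤ M) (hN : 0 ≤ N) (hSm : ∀ n, (S n).Monic) (n : ℕ) :
    0 < tC μ c M N S n := by
  unfold tC
  have := ipS_S_pos (μ := μ) (c := c) hpos hM hN hSm n
  positivity

lemma r2C_pos (hpos : ∀ q : Polynomial ℝ, q ≠ 0 → 0 < ∫ x, q.eval x ^ 2 ∂μ)
    (hP2m : ∀ n, (P2 n).Monic) (n : ℕ) : 0 < r2C μ c P2 n := by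
  unfold r2C
  have := nrmSq2_pos (μ := μ) (c := c) hpos (P2 n) (hP2m n).ne_zero
  positivity

/-- Orthonormality of `sN` in the Sobolev inner product. -/
lemma sN_on (hmom : ∀ n : ℕ, Integrable (fun x : ℝ => x ^ n) μ)
    (hpos : ∀ q : Polynomial ℝ, q ≠ 0 → 0 < ∫ x, q.eval x ^ 2 ∂μ)
    (hM : 0 ≤ M) (hN : 0 ≤ N) (hSm : ∀ n, (S n).Monic)
    (hSo : ∀ m n, m ≠ n → ipS μ c M N (S m) (S n) = 0)
    (j k : ℕ) :
    ipS μ c M N (sN μ c M N S j) (sN μ c M N S k) = kdel j k := by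
  unfold sN
  rw [ipS_Cmul_left, ipS_Cmul_right]
  by_cases hjk : j = k
  · subst hjk
    have hv := ipS_S_pos (μ := μ) (c := c) hpos hM hN hSm j
    unfold kdel tC
    rw [if_pos rfl]
    have hs : Real.sqrt (ipS μ c M N (S j) (S j)) * Real.sqrt (ipS μ c M N (S j) (S j))
        = ipS μ c M N (S j) (S j) := Real.mul_self_sqrt hv.le
    have hs0 : (0:ℝ) < Real.sqrt (ipS μ c M N (S j) (S j)) := Real.sqrt_pos.mpr hv
    field_simp
    rw [sq, hs]
  · rw [hSo j k hjk, kdel, if_neg hjk]; ring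

lemma sN_deg (n : ℕ) : (sN μ c M N S n).natDegree ≤ (S n).natDegree :=
  natDegree_C_mul_le _ _

lemma onP2_deg (n : ℕ) : (onP2 μ c P2 n).natDegree ≤ (P2 n).natDegree :=
  natDegree_C_mul_le _ _

end Aux4
section Aux5
open MeasureTheory Polynomial
variable {μ : Measure ℝ} {c M N : ℝ} {P2 S : ℕ → Polynomial ℝ}

lemma ipS_sum_left (hmom : ∀ n : ℕ, Integrable (fun x : ℝ => x ^ n) μ) {ι : Type*}
    (s : Finset ι) (f : ι → Polynomial ℝ) (B : Polynomial ℝ) :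
    ipS μ c M N (∑ i ∈ s, f i) B = ∑ i ∈ s, ipS μ c M N (f i) B := by
  classical
  induction s using Finset.induction with
  | empty => simpa using ipS_Cmul_left (μ := μ) (c := c) (M := M) (N := N) 0 0 B
  | insert _ _ h ih => rw [Finset.sum_insert h, Finset.sum_insert h, ipS_add_left hmom, ih]

lemma ipS_sub_left (hmom : ∀ n : ℕ, Integrable (fun x : ℝ => x ^ n) μ)
    (p q B : Polynomial ℝ) :
    ipS μ c M N (p - q) B = ipS μ c M N p B - ipS μ c M N q B := by
  have h := ipS_add_left (μ := μ) (c := c) (M := M) (N := N) hmom (p - q) q B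
  rw [sub_add_cancel] at h
  linarith

/-- Fourier expansion of a polynomial of degree `≤ D` in the orthonormal family `onP2`. -/
lemma expand_p2 (hmom : ∀ n : ℕ, Integrable (fun x : ℝ => x ^ n) μ)
    (hpos : ∀ q : Polynomial ℝ, q ≠ 0 → 0 < ∫ x, q.eval x ^ 2 ∂μ)
    (hP2m : ∀ n, (P2 n).Monic) (hP2d : ∀ n, (P2 n).natDegree = n)
    (hP2o : ∀ m n, m ≠ n → ∫ x, (P2 m).eval x * (P2 n).eval x * (x - c) ^ 2 ∂μ = 0)
    (F : Polynomial ℝ) (D : ℕ) (hF : F.natDegree ≤ D) :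
    F = ∑ k ∈ Finset.range (D + 1),
        C (intP μ (F * onP2 μ c P2 k * (X - C c) ^ 2)) * onP2 μ c P2 k := by
  set a : ℕ → ℝ := fun k => intP μ (F * onP2 μ c P2 k * (X - C c) ^ 2) with ha
  set G : Polynomial ℝ := ∑ k ∈ Finset.range (D + 1), C (a k) * onP2 μ c P2 k with hG
  set q : Polynomial ℝ := F - G with hq
  have hGdeg : G.natDegree ≤ D := by
    refine natDegree_sum_le_of_forall_le _ _ fun k hk => ?_
    refine le_trans (natDegree_C_mul_le _ _) (le_trans (onP2_deg k) ?_)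
    rw [hP2d k]
    exact Nat.lt_succ_iff.mp (Finset.mem_range.mp hk)
  have hqdeg : q.natDegree ≤ D := le_trans (natDegree_sub_le _ _) (max_le hF hGdeg)
  -- Fourier coefficients of q vanish
  have key : ∀ j, j ≤ D → intP μ (q * (onP2 μ c P2 j * (X - C c) ^ 2)) = 0 := by
    intro j hj
    have h1 : q * (onP2 μ c P2 j * (X - C c) ^ 2)
        = F * onP2 μ c P2 j * (X - C c) ^ 2 - G * (onP2 μ c P2 j * (X - C c) ^ 2) := by
      rw [hq]; ring
    rw [h1, intP_sub hmom]
    have h2 : G * (onP2 μ c P2 j * (X - C c) ^ 2)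
        = ∑ k ∈ Finset.range (D + 1),
            C (a k) * (onP2 μ c P2 k * onP2 μ c P2 j * (X - C c) ^ 2) := by
      rw [hG, Finset.sum_mul]
      refine Finset.sum_congr rfl fun k _ => by ring
    rw [h2, intP_sum hmom]
    have h3 : ∀ k ∈ Finset.range (D + 1),
        intP μ (C (a k) * (onP2 μ c P2 k * onP2 μ c P2 j * (X - C c) ^ 2))
          = if k = j then a k else 0 := by
      intro k _
      rw [intP_Cmul, onP2_on hmom hpos hP2m hP2o k j]
      unfold kdel
      split <;> simp
    rw [Finset.sum_congr rfl h3, Finset.sum_ite_eq' (Finset.range (D + 1)) j a,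
      if_pos (Finset.mem_range.mpr (by omega))]
    simp only [ha]
    ring
  -- hence q is orthogonal to all P2 j, j ≤ D
  have key2 : ∀ j, j ≤ D → intP μ (P2 j * (q * (X - C c) ^ 2)) = 0 := by
    intro j hj
    have hr : (0:ℝ) < r2C μ c P2 j := r2C_pos hpos hP2m j
    have h1 : q * (onP2 μ c P2 j * (X - C c) ^ 2)
        = C (r2C μ c P2 j) * (P2 j * (q * (X - C c) ^ 2)) := by
      unfold onP2; ring
    have h2 := key j hj
    rw [h1, intP_Cmul] at h2
    exact (mul_eq_zero.mp h2).resolve_left hr.ne'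
  -- q ⊥ q
  have hqq : intP μ (q * (q * (X - C c) ^ 2)) = 0 := by
    refine span_zero P2 hP2m hP2d (fun f => intP μ (f * (q * (X - C c) ^ 2)))
      (fun p r => by
        show intP μ ((p + r) * (q * (X - C c) ^ 2)) = _
        rw [add_mul, intP_add hmom])
      (fun b p => by
        show intP μ (C b * p * (q * (X - C c) ^ 2)) = _
        rw [mul_assoc, intP_Cmul]) D key2 q hqdeg
  -- conclude q = 0
  have hq0 : q = 0 := by
    by_contra h0
    have hne : q * (X - C c) ≠ 0 := mul_ne_zero h0 (X_sub_C_ne_zero c)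
    have hpq := hpos (q * (X - C c)) hne
    have he : intP μ (q * (q * (X - C c) ^ 2)) = ∫ x, (q * (X - C c)).eval x ^ 2 ∂μ := by
      unfold intP
      congr 1; funext x
      simp only [eval_mul, eval_pow, eval_sub, eval_X, eval_C]
      ring
    rw [he] at hqq
    linarith
  have := sub_eq_zero.mp hq0
  rw [hq] at hq0
  linear_combination (norm := ring_nf) hq0
end Aux5
section Aux6
open MeasureTheory Polynomial
variable {μ : Measure ℝ} {c M N : ℝ} {P2 S : ℕ → Polynomial ℝ}

/-- Fourier expansion of a polynomial of degree `≤ D` in the Sobolev orthonormal family `sN`. -/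
lemma expand_S (hmom : ∀ n : ℕ, Integrable (fun x : ℝ => x ^ n) μ)
    (hpos : ∀ q : Polynomial ℝ, q ≠ 0 → 0 < ∫ x, q.eval x ^ 2 ∂μ)
    (hM : 0 ≤ M) (hN : 0 ≤ N)
    (hSm : ∀ n, (S n).Monic) (hSd : ∀ n, (S n).natDegree = n)
    (hSo : ∀ m n, m ≠ n → ipS μ c M N (S m) (S n) = 0)
    (F : Polynomial ℝ) (D : ℕ) (hF : F.natDegree ≤ D) :
    F = ∑ k ∈ Finset.range (D + 1),
        C (ipS μ c M N F (sN μ c M N S k)) * sN μ c M N S k := by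
  set a : ℕ → ℝ := fun k => ipS μ c M N F (sN μ c M N S k) with ha
  set G : Polynomial ℝ := ∑ k ∈ Finset.range (D + 1), C (a k) * sN μ c M N S k with hG
  set q : Polynomial ℝ := F - G with hq
  have hGdeg : G.natDegree ≤ D := by
    refine natDegree_sum_le_of_forall_le _ _ fun k hk => ?_
    refine le_trans (natDegree_C_mul_le _ _) (le_trans (sN_deg k) ?_)
    rw [hSd k]
    exact Nat.lt_succ_iff.mp (Finset.mem_range.mp hk)
  have hqdeg : q.natDegree ≤ D := le_trans (natDegree_sub_le _ _) (max_le hF hGdeg)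
  have key : ∀ j, j ≤ D → ipS μ c M N q (sN μ c M N S j) = 0 := by
    intro j hj
    rw [hq, ipS_sub_left hmom]
    have h2 : ipS μ c M N G (sN μ c M N S j) = a j := by
      rw [hG, ipS_sum_left hmom]
      have h3 : ∀ k ∈ Finset.range (D + 1),
          ipS μ c M N (C (a k) * sN μ c M N S k) (sN μ c M N S j)
            = if k = j then a k else 0 := by
        intro k _
        rw [ipS_Cmul_left, sN_on hmom hpos hM hN hSm hSo k j]
        unfold kdel
        split <;> simp
      rw [Finset.sum_congr rfl h3, Finset.sum_ite_eq' (Finset.range (D + 1)) j a,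
        if_pos (Finset.mem_range.mpr (by omega))]
    rw [h2]
    simp only [ha]
    ring
  have key2 : ∀ j, j ≤ D → ipS μ c M N (S j) q = 0 := by
    intro j hj
    have ht : (0:ℝ) < tC μ c M N S j := tC_pos hpos hM hN hSm j
    have h1 := key j hj
    unfold sN at h1
    rw [ipS_Cmul_right] at h1
    rw [ipS_comm]
    exact (mul_eq_zero.mp h1).resolve_left ht.ne'
  have hqq : ipS μ c M N q q = 0 := by
    refine span_zero S hSm hSd (fun f => ipS μ c M N f q)
      (fun p r => ipS_add_left hmom p r q)
      (fun b p => ipS_Cmul_left b p q) D ?_ q hqdeg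
    intro j hj
    exact key2 j hj
  have hq0 : q = 0 := by
    by_contra h0
    have hpq := hpos q h0
    have hle := ipS_self_ge (μ := μ) (c := c) hM hN q
    linarith [hqq ▸ hle]
  rw [hq] at hq0
  linear_combination (norm := ring_nf) hq0
end Aux6
/-- `T·(J_{[2]} - cI)² = H·T` entrywise, where `J_{[2]}` is tridiagonal,
`H` is five-diagonal and `T` is lower triangular with bandwidth 2 (so that all the
series below have only finitely many nonzero terms). -/
theorem stmt13
    (μ : Measure ℝ) [IsFiniteMeasure μ]
    (hmom : ∀ n : ℕ, Integrable (fun x : ℝ => x ^ n) μ)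
    (hpos : ∀ q : Polynomial ℝ, q ≠ 0 → 0 < ∫ x, q.eval x ^ 2 ∂μ)
    (c : ℝ) (hc : ∀ᵐ x ∂μ, c < x)
    (P2 : ℕ → Polynomial ℝ) (hP2m : ∀ n, (P2 n).Monic) (hP2d : ∀ n, (P2 n).natDegree = n)
    (hP2o : ∀ m n, m ≠ n → ∫ x, (P2 m).eval x * (P2 n).eval x * (x - c) ^ 2 ∂μ = 0)
    (M N : ℝ) (hM : 0 ≤ M) (hN : 0 ≤ N)
    (S : ℕ → Polynomial ℝ) (hSm : ∀ n, (S n).Monic) (hSd : ∀ n, (S n).natDegree = n)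
    (hSo : ∀ m n, m ≠ n → ipS μ c M N (S m) (S n) = 0) :
    (∀ k j : ℕ, k + 1 < j ∨ j + 1 < k → J2mat μ c P2 k j = 0)
    ∧ (∀ n m : ℕ, n + 2 < m ∨ m + 2 < n → Hmat μ c M N S n m = 0)
    ∧ (∀ n m : ℕ, n < m ∨ m + 2 < n → Tmat μ c M N S P2 n m = 0)
    ∧ (∀ n m : ℕ,
        ∑' k : ℕ, Tmat μ c M N S P2 n k
            * (∑' j : ℕ, (J2mat μ c P2 k j - c * kdel k j)
                * (J2mat μ c P2 j m - c * kdel j m))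
          = ∑' k : ℕ, Hmat μ c M N S n k * Tmat μ c M N S P2 k m) := by
  classical
  -- notation
  set w : Polynomial ℝ := (X - C c) ^ 2 with hw
  have hwdeg : w.natDegree = 2 := by rw [hw, natDegree_pow, natDegree_X_sub_C]
  -- conversions
  have hJ2eq : ∀ k j, J2mat μ c P2 k j
      = intP μ (X * (onP2 μ c P2 k * onP2 μ c P2 j) * w) := by
    intro k j
    unfold J2mat intP
    congr 1; funext x
    simp only [hw, eval_mul, eval_pow, eval_sub, eval_X, eval_C]
  have hTeq : ∀ n m, Tmat μ c M N S P2 n m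
      = intP μ (sN μ c M N S n * onP2 μ c P2 m * w) := by
    intro n m
    rw [hw, intP_eval3]
    rfl
  have hsNdeg : ∀ n, (sN μ c M N S n).natDegree ≤ n := fun n => (sN_deg n).trans_eq (hSd n)
  have hp2deg : ∀ n, (onP2 μ c P2 n).natDegree ≤ n := fun n => (onP2_deg n).trans_eq (hP2d n)
  -- Part 1
  have part1a : ∀ k j : ℕ, k + 1 < j → J2mat μ c P2 k j = 0 := by
    intro k j hkj
    rw [hJ2eq k j]
    have h1 : X * (onP2 μ c P2 k * onP2 μ c P2 j) * w
        = C (r2C μ c P2 j) * ((X * onP2 μ c P2 k) * (P2 j * w)) := by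
      unfold onP2; ring
    rw [h1, intP_Cmul, hw,
      orthP2 hmom hP2m hP2d hP2o j (X * onP2 μ c P2 k) ?_, mul_zero]
    calc (X * onP2 μ c P2 k).natDegree ≤ (X : Polynomial ℝ).natDegree
          + (onP2 μ c P2 k).natDegree := natDegree_mul_le
    _ ≤ 1 + k := by rw [natDegree_X]; exact Nat.add_le_add_left (hp2deg k) 1
    _ < j := by omega
  have hJ2symm : ∀ k j, J2mat μ c P2 k j = J2mat μ c P2 j k := by
    intro k j
    unfold J2mat
    congr 1; funext x; ring
  have part1 : ∀ k j : ℕ, k + 1 < j ∨ j + 1 < k → J2mat μ c P2 k j = 0 := by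
    intro k j h
    rcases h with h | h
    · exact part1a k j h
    · rw [hJ2symm]; exact part1a j k h
  -- Part 2
  have hwsdeg : ∀ n, (w * sN μ c M N S n).natDegree ≤ 2 + n := by
    intro n
    calc (w * sN μ c M N S n).natDegree ≤ w.natDegree + (sN μ c M N S n).natDegree :=
        natDegree_mul_le
    _ ≤ 2 + n := by rw [hwdeg]; exact Nat.add_le_add_left (hsNdeg n) 2
  have part2 : ∀ n m : ℕ, n + 2 < m ∨ m + 2 < n → Hmat μ c M N S n m = 0 := by
    intro n m h
    have hH : Hmat μ c M N S n m = ipS μ c M N (w * sN μ c M N S n) (sN μ c M N S m) := rfl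
    rcases h with h | h
    · rw [hH]
      have h2 : sN μ c M N S m = C (tC μ c M N S m) * S m := rfl
      rw [h2, ipS_Cmul_right,
        orthS hmom hSm hSd hSo m (w * sN μ c M N S n) (lt_of_le_of_lt (hwsdeg n) (by omega)), mul_zero]
    · rw [hH, hw, ipS_shift, ← hw, ipS_comm]
      have h2 : sN μ c M N S n = C (tC μ c M N S n) * S n := rfl
      rw [h2, ipS_Cmul_right,
        orthS hmom hSm hSd hSo n (w * sN μ c M N S m) (lt_of_le_of_lt (hwsdeg m) (by omega)), mul_zero]
  -- Part 3
  have part3 : ∀ n m : ℕ, n < m ∨ m + 2 < n → Tmat μ c M N S P2 n m = 0 := by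
    intro n m h
    rcases h with h | h
    · rw [hTeq]
      have h1 : sN μ c M N S n * onP2 μ c P2 m * w
          = C (r2C μ c P2 m) * (sN μ c M N S n * (P2 m * w)) := by
        unfold onP2; ring
      rw [h1, intP_Cmul, hw,
        orthP2 hmom hP2m hP2d hP2o m (sN μ c M N S n) (lt_of_le_of_lt (hsNdeg n) h),
        mul_zero]
    · rw [hTeq]
      have h1 : intP μ (sN μ c M N S n * onP2 μ c P2 m * w)
          = ipS μ c M N (sN μ c M N S n) (w * onP2 μ c P2 m) := by
        rw [hw, ipS_w hmom]
      rw [h1, ipS_comm]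
      have h2 : sN μ c M N S n = C (tC μ c M N S n) * S n := rfl
      have hdg : (w * onP2 μ c P2 m).natDegree < n := by
        calc (w * onP2 μ c P2 m).natDegree ≤ w.natDegree + (onP2 μ c P2 m).natDegree :=
            natDegree_mul_le
        _ ≤ 2 + m := by rw [hwdeg]; exact Nat.add_le_add_left (hp2deg m) 2
        _ < n := by omega
      rw [h2, ipS_Cmul_right, orthS hmom hSm hSd hSo n (w * onP2 μ c P2 m) hdg, mul_zero]
  refine ⟨part1, part2, part3, ?_⟩
  -- Part 4
  intro n m
  have hAeq : ∀ k j, J2mat μ c P2 k j - c * kdel k j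
      = intP μ ((X - C c) * (onP2 μ c P2 k * onP2 μ c P2 j) * w) := by
    intro k j
    have hk : kdel k j = intP μ (onP2 μ c P2 k * onP2 μ c P2 j * w) := by
      rw [hw]
      exact (onP2_on hmom hpos hP2m hP2o k j).symm
    have h1 : (X - C c) * (onP2 μ c P2 k * onP2 μ c P2 j) * w
        = X * (onP2 μ c P2 k * onP2 μ c P2 j) * w
          - C c * (onP2 μ c P2 k * onP2 μ c P2 j * w) := by ring
    rw [h1, intP_sub hmom, intP_Cmul, ← hJ2eq k j, ← hk]
  -- inner sums
  have hB : ∀ k, (∑' j, (J2mat μ c P2 k j - c * kdel k j) * (J2mat μ c P2 j m - c * kdel j m))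
      = intP μ (w * (onP2 μ c P2 k * onP2 μ c P2 m) * w) := by
    intro k
    have hsupp : ∀ j ∉ Finset.range (k + 2),
        (J2mat μ c P2 k j - c * kdel k j) * (J2mat μ c P2 j m - c * kdel j m) = 0 := by
      intro j hj
      have hj' : ¬ j < k + 2 := fun h => hj (Finset.mem_range.mpr h)
      rw [part1 k j (Or.inl (by omega)), kdel, if_neg (by omega)]
      ring
    rw [tsum_eq_sum hsupp]
    simp only [hAeq]
    -- expansion of (X - C c) * onP2 k
    have hdeg0 : ((X - C c) * onP2 μ c P2 k).natDegree ≤ k + 1 := by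
      calc ((X - C c) * onP2 μ c P2 k).natDegree
          ≤ (X - C c).natDegree + (onP2 μ c P2 k).natDegree := natDegree_mul_le
      _ ≤ 1 + k := by rw [natDegree_X_sub_C]; exact Nat.add_le_add_left (hp2deg k) 1
      _ = k + 1 := by omega
    have E0 := expand_p2 hmom hpos hP2m hP2d hP2o ((X - C c) * onP2 μ c P2 k) (k + 1) hdeg0
    have E0' : (X - C c) * onP2 μ c P2 k
        = ∑ j ∈ Finset.range (k + 2),
            C (intP μ ((X - C c) * (onP2 μ c P2 k * onP2 μ c P2 j) * w)) * onP2 μ c P2 j := by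
      rw [E0]
      refine Finset.sum_congr rfl fun j _ => ?_
      rw [hw]
      rw [show (X - C c) * onP2 μ c P2 k * onP2 μ c P2 j * (X - C c) ^ 2
          = (X - C c) * (onP2 μ c P2 k * onP2 μ c P2 j) * (X - C c) ^ 2 from by ring]
    have hgoal : intP μ (w * (onP2 μ c P2 k * onP2 μ c P2 m) * w)
        = intP μ (((X - C c) * onP2 μ c P2 k) * ((X - C c) * onP2 μ c P2 m * w)) := by
      congr 1
      rw [hw]; ring
    rw [hgoal]
    conv_rhs => rw [E0']
    rw [Finset.sum_mul, intP_sum hmom]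
    refine Finset.sum_congr rfl fun j _ => ?_
    rw [show C (intP μ ((X - C c) * (onP2 μ c P2 k * onP2 μ c P2 j) * w)) * onP2 μ c P2 j
          * ((X - C c) * onP2 μ c P2 m * w)
        = C (intP μ ((X - C c) * (onP2 μ c P2 k * onP2 μ c P2 j) * w))
          * ((X - C c) * (onP2 μ c P2 j * onP2 μ c P2 m) * w) from by ring, intP_Cmul]
  -- expansion of sN n in the onP2 basis with coefficients Tmat n k
  have E1 := expand_p2 hmom hpos hP2m hP2d hP2o (sN μ c M N S n) n (hsNdeg n)
  have E1' : sN μ c M N S n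
      = ∑ k ∈ Finset.range (n + 1), C (Tmat μ c M N S P2 n k) * onP2 μ c P2 k := by
    rw [E1]
    refine Finset.sum_congr rfl fun k _ => ?_
    rw [hTeq n k, hw]
  have hL : intP μ (sN μ c M N S n * ((X - C c) * onP2 μ c P2 m * w * (X - C c)))
      = ∑ k ∈ Finset.range (n + 1), Tmat μ c M N S P2 n k
          * intP μ (w * (onP2 μ c P2 k * onP2 μ c P2 m) * w) := by
    conv_lhs => rw [E1']
    rw [Finset.sum_mul, intP_sum hmom]
    refine Finset.sum_congr rfl fun k _ => ?_
    rw [show C (Tmat μ c M N S P2 n k) * onP2 μ c P2 k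
          * ((X - C c) * onP2 μ c P2 m * w * (X - C c))
        = C (Tmat μ c M N S P2 n k)
          * ((X - C c) ^ 2 * (onP2 μ c P2 k * onP2 μ c P2 m) * w) from by ring, intP_Cmul,
      hw]
  -- expansion of w * sN n in the sN basis with coefficients Hmat n k
  have E2 := expand_S hmom hpos hM hN hSm hSd hSo (w * sN μ c M N S n) (n + 2) ((hwsdeg n).trans (by omega))
  have E2' : w * sN μ c M N S n
      = ∑ k ∈ Finset.range (n + 3), C (Hmat μ c M N S n k) * sN μ c M N S k := by
    rw [E2]
    refine Finset.sum_congr rfl fun k _ => ?_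
    rw [hw]
    rfl
  have hR : intP μ ((w * sN μ c M N S n) * (onP2 μ c P2 m * w))
      = ∑ k ∈ Finset.range (n + 3), Hmat μ c M N S n k * Tmat μ c M N S P2 k m := by
    conv_lhs => rw [E2']
    rw [Finset.sum_mul, intP_sum hmom]
    refine Finset.sum_congr rfl fun k _ => ?_
    rw [show C (Hmat μ c M N S n k) * sN μ c M N S k * (onP2 μ c P2 m * w)
        = C (Hmat μ c M N S n k) * (sN μ c M N S k * onP2 μ c P2 m * w) from by ring,
      intP_Cmul, ← hTeq k m]
  have hLsupp : ∀ k ∉ Finset.range (n + 1),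
      Tmat μ c M N S P2 n k
        * (∑' j, (J2mat μ c P2 k j - c * kdel k j) * (J2mat μ c P2 j m - c * kdel j m)) = 0 := by
    intro k hk
    have hk' : ¬ k < n + 1 := fun h => hk (Finset.mem_range.mpr h)
    rw [part3 n k (Or.inl (by omega)), zero_mul]
  have hRsupp : ∀ k ∉ Finset.range (n + 3),
      Hmat μ c M N S n k * Tmat μ c M N S P2 k m = 0 := by
    intro k hk
    have hk' : ¬ k < n + 3 := fun h => hk (Finset.mem_range.mpr h)
    rw [part2 n k (Or.inl (by omega)), zero_mul]
  calc (∑' k : ℕ, Tmat μ c M N S P2 n k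
          * (∑' j : ℕ, (J2mat μ c P2 k j - c * kdel k j) * (J2mat μ c P2 j m - c * kdel j m)))
      = ∑ k ∈ Finset.range (n + 1), Tmat μ c M N S P2 n k
          * (∑' j : ℕ, (J2mat μ c P2 k j - c * kdel k j)
              * (J2mat μ c P2 j m - c * kdel j m)) := tsum_eq_sum hLsupp
    _ = ∑ k ∈ Finset.range (n + 1), Tmat μ c M N S P2 n k
          * intP μ (w * (onP2 μ c P2 k * onP2 μ c P2 m) * w) :=
        Finset.sum_congr rfl fun k _ => by rw [hB k]
    _ = intP μ (sN μ c M N S n * ((X - C c) * onP2 μ c P2 m * w * (X - C c))) := hL.symm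
    _ = intP μ ((w * sN μ c M N S n) * (onP2 μ c P2 m * w)) := by
        congr 1
        rw [hw]; ring
    _ = ∑ k ∈ Finset.range (n + 3), Hmat μ c M N S n k * Tmat μ c M N S P2 k m := hR
    _ = ∑' k : ℕ, Hmat μ c M N S n k * Tmat μ c M N S P2 k m := (tsum_eq_sum hRsupp).symm
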